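/- Let δ be real with 0 ≤ δ < 1, let h, ζ, A, B, u be complex numbers with |h| ≤ δ, |ζ| < 1 and |u| = 1. Then |ζ − h|²·|A − u·conj(B)|² / (|1 − conj(h)·ζ|²·(1 − |h|²)²) + (1 − |ζ|²)·( |B|²/(|1 − conj(h)·ζ|²·(1 − |h|²)) + |ζ − h|²·|A|²/(|1 − conj(h)·ζ|⁴·(1 − |h|²)) ) ≥ (1 − δ)²·min{(|A| − |B|)², |B|²} / 4. -/

import Mathlib

open Complex

set_option maxHeartbeats 1000000 in
/-- Quantitative core of the lower estimate for the determinant of the complex Hessian of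
`−log(−r₀)` on a holomorphic disc bundle. -/
theorem stmt_12 (δ : ℝ) (hδ0 : 0 ≤ δ) (hδ1 : δ < 1) (h ζ A B u : ℂ)
    (hh : ‖h‖ ≤ δ) (hζ : ‖ζ‖ < 1) (hu : ‖u‖ = 1) :
    (1 - δ) ^ 2 * min ((‖A‖ - ‖B‖) ^ 2) (‖B‖ ^ 2) / 4
      ≤ ‖ζ - h‖ ^ 2 * ‖A - u * (starRingEnd ℂ) B‖ ^ 2
          / (‖1 - (starRingEnd ℂ) h * ζ‖ ^ 2 * (1 - ‖h‖ ^ 2) ^ 2)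
        + (1 - ‖ζ‖ ^ 2) *
          (‖B‖ ^ 2
              / (‖1 - (starRingEnd ℂ) h * ζ‖ ^ 2 * (1 - ‖h‖ ^ 2))
            + ‖ζ - h‖ ^ 2 * ‖A‖ ^ 2
              / (‖1 - (starRingEnd ℂ) h * ζ‖ ^ 4 * (1 - ‖h‖ ^ 2))) := by
  set a2 := ‖ζ - h‖ ^ 2 with ha2def
  set c2 := ‖1 - (starRingEnd ℂ) h * ζ‖ ^ 2 with hc2def
  set d := 1 - ‖h‖ ^ 2 with hddef
  set s := 1 - ‖ζ‖ ^ 2 with hsdef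
  set X := ‖A - u * (starRingEnd ℂ) B‖ ^ 2 with hXdef
  set A2 := ‖A‖ ^ 2 with hA2def
  set B2 := ‖B‖ ^ 2 with hB2def
  set P := (‖A‖ - ‖B‖) ^ 2 with hPdef
  set m := min P B2 with hmdef
  have habsh : ‖h‖ < 1 := lt_of_le_of_lt hh hδ1
  have hd : 0 < d := by
    have h0 : 0 ≤ ‖h‖ := norm_nonneg h
    nlinarith
  have hd1 : d ≤ 1 := by
    have h0 : 0 ≤ ‖h‖ := norm_nonneg h
    nlinarith
  have hs : 0 < s := by
    have h0 : 0 ≤ ‖ζ‖ := norm_nonneg ζ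
    nlinarith
  have ha2 : 0 ≤ a2 := by positivity
  have hA2 : 0 ≤ A2 := by positivity
  have hB2 : 0 ≤ B2 := by positivity
  have hP : 0 ≤ P := by positivity
  have hm0 : 0 ≤ m := le_min hP hB2
  have hmP : m ≤ P := min_le_left _ _
  have hmB : m ≤ B2 := min_le_right _ _
  -- key identity  c2 = a2 + s * d
  have hid : c2 = a2 + s * d := by
    rw [hc2def, ha2def, hsdef, hddef]
    rw [Complex.sq_norm, Complex.sq_norm, Complex.sq_norm, Complex.sq_norm]
    simp only [Complex.normSq_apply, Complex.sub_re, Complex.sub_im, Complex.mul_re,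
      Complex.mul_im, Complex.one_re, Complex.one_im]
    simp only [Complex.conj_re, Complex.conj_im]
    ring
  have hc2 : 0 < c2 := by nlinarith
  -- P ≤ X
  have hPX : P ≤ X := by
    have h1 : |‖A‖ - ‖u * (starRingEnd ℂ) B‖|
        ≤ ‖A - u * (starRingEnd ℂ) B‖ :=
      abs_norm_sub_norm_le A (u * (starRingEnd ℂ) B)
    have h2 : ‖u * (starRingEnd ℂ) B‖ = ‖B‖ := by
      rw [norm_mul, hu, Complex.norm_conj, one_mul]
    rw [h2] at h1
    calc P = |‖A‖ - ‖B‖| ^ 2 := (_root_.sq_abs _).symm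
      _ ≤ X := pow_le_pow_left₀ (abs_nonneg _) h1 2
  -- main lower bound with constant m
  have key : m ≤ a2 * X / (c2 * d ^ 2) + (s * B2 / (c2 * d) + s * (a2 * A2) / (c2 ^ 2 * d)) := by
    have hX0 : 0 ≤ X := by positivity
    have h1 : a2 * m / c2 ≤ a2 * X / (c2 * d ^ 2) := by
      apply div_le_div₀ (mul_nonneg ha2 hX0)
        (mul_le_mul_of_nonneg_left (le_trans hmP hPX) ha2) (by positivity)
      nlinarith [mul_le_mul_of_nonneg_left (mul_le_one₀ hd1 hd.le hd1) hc2.le]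
    have h2 : s * d * m / c2 ≤ s * B2 / (c2 * d) := by
      apply div_le_div₀ (mul_nonneg hs.le hB2) (by nlinarith [mul_le_mul_of_nonneg_left hd1 hs.le]) (by positivity)
      nlinarith [mul_le_mul_of_nonneg_left hd1 hc2.le]
    have h3 : 0 ≤ s * (a2 * A2) / (c2 ^ 2 * d) := by positivity
    have h4 : m = a2 * m / c2 + s * d * m / c2 := by
      field_simp
      nlinarith [hid]
    linarith
  have final : a2 * X / (c2 * d ^ 2)
      + s * (B2 / (c2 * d) + a2 * A2 / (c2 ^ 2 * d))
      = a2 * X / (c2 * d ^ 2) + (s * B2 / (c2 * d) + s * (a2 * A2) / (c2 ^ 2 * d)) := by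
    ring
  have e4 : ‖1 - (starRingEnd ℂ) h * ζ‖ ^ 4 = c2 ^ 2 := by rw [hc2def]; ring
  rw [e4]
  have hgoal : (1 - δ) ^ 2 * m / 4 ≤ m := by
    have hle : (1 - δ) ^ 2 ≤ 1 := by nlinarith
    nlinarith [mul_le_mul_of_nonneg_right hle hm0]
  calc (1 - δ) ^ 2 * m / 4 ≤ m := hgoal
    _ ≤ a2 * X / (c2 * d ^ 2) + (s * B2 / (c2 * d) + s * (a2 * A2) / (c2 ^ 2 * d)) := key
    _ = _ := final.symm
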